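/- With φᵢ = aᵢ+...+a_{i+k-2}, ψᵢ = aᵢ+...+a_{i+k-1} (indices mod 2k-1), aᵢ ≥ 1, Σaᵢ = n+3, the polynomial t^{n+3} − Σᵢ t^{ψᵢ} + Σᵢ t^{φᵢ} − 1 is divisible by (t−1)³ in Z[t]. -/

import Mathlib

open Polynomial Finset

private lemma key_pow (e : ℕ) :
    ((X : ℤ[X]) - 1) ^ 3 ∣
      X ^ e - (1 + (e : ℤ[X]) * (X - 1) + (e.choose 2 : ℤ[X]) * (X - 1) ^ 2) := by
  induction e with
  | zero => simp
  | succ n ih =>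
    obtain ⟨q, hq⟩ := ih
    refine ⟨X * q + (n.choose 2 : ℤ[X]), ?_⟩
    have hc : (((n + 1).choose 2 : ℕ) : ℤ[X]) = (n.choose 2 : ℤ[X]) + (n : ℤ[X]) := by
      rw [Nat.choose_succ_succ]
      push_cast [Nat.choose_one_right]
      ring
    push_cast
    push_cast at hc
    rw [hc]
    linear_combination (X : ℤ[X]) * hq

private lemma choose_two_int (e : ℕ) : ((e.choose 2 : ℕ) : ℤ) * 2 = (e : ℤ) ^ 2 - e := by
  induction e with
  | zero => simp
  | succ n ih =>
    rw [Nat.choose_succ_succ]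
    push_cast [Nat.choose_one_right] at ih ⊢
    linarith

private lemma sum_shiftR {m : ℕ} [NeZero m] {M : Type*} [AddCommMonoid M]
    (f : ZMod m → M) (c : ZMod m) : ∑ x : ZMod m, f (x + c) = ∑ x : ZMod m, f x :=
  Equiv.sum_comp (Equiv.addRight c) f

private lemma sum_shiftL {m : ℕ} [NeZero m] {M : Type*} [AddCommMonoid M]
    (f : ZMod m → M) (c : ZMod m) : ∑ x : ZMod m, f (c + x) = ∑ x : ZMod m, f x :=
  Equiv.sum_comp (Equiv.addLeft c) f

private lemma sum_range_m {m : ℕ} [NeZero m] {M : Type*} [AddCommMonoid M]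
    (f : ZMod m → M) : ∑ j ∈ Finset.range m, f (j : ZMod m) = ∑ x : ZMod m, f x := by
  refine Finset.sum_nbij' (fun j => ((j : ℕ) : ZMod m)) (fun x => x.val)
    (fun j _ => mem_univ _) (fun x _ => mem_range.2 x.val_lt)
    (fun j hj => ZMod.val_cast_of_lt (mem_range.1 hj)) (fun x _ => ZMod.natCast_rightInverse x)
    (fun j _ => rfl)

theorem h_polynomial_divisibility (k m : ℕ) [NeZero m] (hk : 2 ≤ k) (hm : m = 2 * k - 1)
    (a : ZMod m → ℕ) (ha : ∀ i, 1 ≤ a i) (n : ℕ) (hn : n + 3 = ∑ i, a i) :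
    ((Polynomial.X - 1) ^ 3 : Polynomial ℤ) ∣
      (Polynomial.X ^ (n + 3)
        - ∑ i : ZMod m, Polynomial.X ^ (∑ j ∈ Finset.range k, a (i + (j : ZMod m)))
        + ∑ i : ZMod m, Polynomial.X ^ (∑ j ∈ Finset.range (k - 1), a (i + (j : ZMod m)))
        - 1) := by
  show ((X : ℤ[X]) - 1) ^ 3 ∣
      (X ^ (n + 3) - ∑ i : ZMod m, X ^ (∑ j ∈ Finset.range k, a (i + (j : ZMod m)))
        + ∑ i : ZMod m, X ^ (∑ j ∈ Finset.range (k - 1), a (i + (j : ZMod m))) - 1)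
  set S : ℕ := n + 3 with hS
  set ψ : ZMod m → ℕ := fun i => ∑ j ∈ Finset.range k, a (i + (j : ZMod m)) with hψ
  set φ : ZMod m → ℕ := fun i => ∑ j ∈ Finset.range (k - 1), a (i + (j : ZMod m)) with hφ
  -- shifted sums over all of ZMod m give S
  have hfull : ∀ i : ZMod m, ∑ x : ZMod m, a (i + x) = S := by
    intro i
    rw [sum_shiftL (fun x => a x) i, hn]
  -- complement identity
  have hcomp : ∀ i : ZMod m, ψ i + φ (i + (k : ZMod m)) = S := by
    intro i
    have hφk : φ (i + (k : ZMod m)) = ∑ j ∈ Finset.range (k - 1), a (i + ((k + j : ℕ) : ZMod m)) := by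
      refine Finset.sum_congr rfl fun j _ => ?_
      push_cast
      rw [add_assoc]
    rw [hφk, hψ]
    have := (Finset.sum_range_add (fun j => a (i + (j : ZMod m))) k (k - 1)).symm
    try simp only [] at this
    rw [this]
    have hkk : k + (k - 1) = m := by omega
    rw [hkk, sum_range_m (fun x => a (i + x)), hfull i]
  -- sums of ψ and φ
  have hA : ∑ i : ZMod m, ψ i = k * S := by
    rw [hψ]
    rw [Finset.sum_comm]
    have : ∀ j ∈ Finset.range k, ∑ i : ZMod m, a (i + (j : ZMod m)) = S := by
      intro j _
      rw [sum_shiftR (fun x => a x) (j : ZMod m), hn]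
    rw [Finset.sum_congr rfl this, Finset.sum_const, card_range, smul_eq_mul]
  have hB : ∑ i : ZMod m, φ i = (k - 1) * S := by
    rw [hφ]
    rw [Finset.sum_comm]
    have : ∀ j ∈ Finset.range (k - 1), ∑ i : ZMod m, a (i + (j : ZMod m)) = S := by
      intro j _
      rw [sum_shiftR (fun x => a x) (j : ZMod m), hn]
    rw [Finset.sum_congr rfl this, Finset.sum_const, card_range, smul_eq_mul]
  -- integer second-moment identity
  have hsq : ∑ i : ZMod m, ((ψ i : ℤ)) ^ 2 = (S : ℤ) ^ 2 + ∑ i : ZMod m, ((φ i : ℤ)) ^ 2 := by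
    have h1 : ∀ i : ZMod m, ((ψ i : ℤ)) ^ 2 =
        (S : ℤ) ^ 2 - 2 * S * (φ (i + (k : ZMod m)) : ℤ) + ((φ (i + (k : ZMod m)) : ℤ)) ^ 2 := by
      intro i
      have := hcomp i
      have hz : ((ψ i : ℤ)) = (S : ℤ) - (φ (i + (k : ZMod m)) : ℤ) := by
        have h' : ((ψ i : ℤ)) + ((φ (i + (k : ZMod m)) : ℤ)) = (S : ℤ) := by exact_mod_cast this
        linarith
      rw [hz]; ring
    rw [Finset.sum_congr rfl fun i _ => h1 i]
    rw [Finset.sum_add_distrib, Finset.sum_sub_distrib]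
    rw [sum_shiftR (fun x => ((φ x : ℤ)) ^ 2) (k : ZMod m),
      ← Finset.mul_sum, sum_shiftR (fun x => ((φ x : ℤ))) (k : ZMod m)]
    rw [Finset.sum_const, card_univ, ZMod.card]
    have hsB : ∑ i : ZMod m, ((φ i : ℤ)) = ((k : ℤ) - 1) * S := by
      rw [← Nat.cast_sum, hB]
      push_cast [Nat.cast_sub (by omega : 1 ≤ k)]
      ring
    rw [hsB]
    have hmz : (m : ℤ) = 2 * k - 1 := by
      rw [hm]; push_cast [Nat.cast_sub (by omega : 1 ≤ 2 * k)]; ring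
    rw [nsmul_eq_mul, hmz]
    ring
  -- choose-2 identity over ℤ
  have hch : ((S.choose 2 : ℕ) : ℤ) + ∑ i : ZMod m, (((φ i).choose 2 : ℕ) : ℤ)
      = ∑ i : ZMod m, (((ψ i).choose 2 : ℕ) : ℤ) := by
    have h2 : (((S.choose 2 : ℕ) : ℤ) + ∑ i : ZMod m, (((φ i).choose 2 : ℕ) : ℤ)) * 2
        = (∑ i : ZMod m, (((ψ i).choose 2 : ℕ) : ℤ)) * 2 := by
      rw [add_mul, Finset.sum_mul, Finset.sum_mul]
      simp only [choose_two_int]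
      rw [Finset.sum_sub_distrib, Finset.sum_sub_distrib]
      have hsA : ∑ i : ZMod m, ((ψ i : ℤ)) = (k : ℤ) * S := by
        rw [← Nat.cast_sum, hA]; push_cast; ring
      have hsB : ∑ i : ZMod m, ((φ i : ℤ)) = ((k : ℤ) - 1) * S := by
        rw [← Nat.cast_sum, hB]
        push_cast [Nat.cast_sub (by omega : 1 ≤ k)]
        ring
      rw [hsA, hsB, hsq]
      ring
    linarith
  -- assemble polynomial proof
  set rr : ℕ → ℤ[X] := fun e => 1 + (e : ℤ[X]) * (X - 1) + (e.choose 2 : ℤ[X]) * (X - 1) ^ 2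
    with hrr
  have h1 : ((X : ℤ[X]) - 1) ^ 3 ∣ X ^ S - rr S := key_pow S
  have h2 : ((X : ℤ[X]) - 1) ^ 3 ∣ ∑ i : ZMod m, (X ^ (ψ i) - rr (ψ i)) :=
    Finset.dvd_sum fun i _ => key_pow _
  have h3 : ((X : ℤ[X]) - 1) ^ 3 ∣ ∑ i : ZMod m, (X ^ (φ i) - rr (φ i)) :=
    Finset.dvd_sum fun i _ => key_pow _
  have h4 : rr S - ∑ i : ZMod m, rr (ψ i) + ∑ i : ZMod m, rr (φ i) - 1 = 0 := by
    simp only [hrr]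
    rw [Finset.sum_add_distrib, Finset.sum_add_distrib, Finset.sum_add_distrib,
      Finset.sum_add_distrib, Finset.sum_const, card_univ, ZMod.card,
      ← Finset.sum_mul, ← Finset.sum_mul, ← Finset.sum_mul, ← Finset.sum_mul,
      ← Nat.cast_sum, ← Nat.cast_sum, ← Nat.cast_sum, ← Nat.cast_sum, hA, hB]
    have hchP : ((S.choose 2 : ℕ) : ℤ[X]) + ∑ i : ZMod m, (((φ i).choose 2 : ℕ) : ℤ[X])
        = ∑ i : ZMod m, (((ψ i).choose 2 : ℕ) : ℤ[X]) := by
      have h' := congrArg (fun z : ℤ => (C z : ℤ[X])) hch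
      push_cast at h' ⊢
      simpa using h'
    have hkp : (((k - 1) * S : ℕ) : ℤ[X]) = ((k : ℤ[X]) - 1) * S := by
      push_cast [Nat.cast_sub (by omega : 1 ≤ k)]
      ring
    rw [hkp]
    push_cast
    linear_combination ((X : ℤ[X]) - 1) ^ 2 * hchP
  have key : (X : ℤ[X]) ^ S - ∑ i : ZMod m, X ^ (ψ i) + ∑ i : ZMod m, X ^ (φ i) - 1
      = (X ^ S - rr S) - ∑ i : ZMod m, (X ^ (ψ i) - rr (ψ i))
        + ∑ i : ZMod m, (X ^ (φ i) - rr (φ i))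
        + (rr S - ∑ i : ZMod m, rr (ψ i) + ∑ i : ZMod m, rr (φ i) - 1) := by
    rw [Finset.sum_sub_distrib, Finset.sum_sub_distrib]
    ring
  calc ((X : ℤ[X]) - 1) ^ 3 ∣ (X ^ S - rr S) - ∑ i : ZMod m, (X ^ (ψ i) - rr (ψ i))
        + ∑ i : ZMod m, (X ^ (φ i) - rr (φ i))
        + (rr S - ∑ i : ZMod m, rr (ψ i) + ∑ i : ZMod m, rr (φ i) - 1) :=
      dvd_add (dvd_add (dvd_sub h1 h2) h3) (h4 ▸ dvd_zero _)
    _ = _ := key.symm
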